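/- For every real z, the probit working weight satisfies φ(z)²/(Φ(z)(1−Φ(z))) ≤ c/(1+e^{|z|}) for some absolute constant c > 0, and hence for x_1,…,x_n spanning ℝ^p with full-rank design X, the penalized probit log-likelihood l*(β) = ∑_i[y_i log Φ(⟨x_i,β⟩) + (m_i−y_i) log(1−Φ(⟨x_i,β⟩))] + (1/2) log det(Xᵀ M W(β) X) attains its supremum on ℝ^p and its set of maximizers is bounded, where W(β) has diagonal entries φ(⟨x_i,β⟩)²/(Φ(⟨x_i,β⟩)(1−Φ(⟨x_i,β⟩))), 0 ≤ y_i ≤ m_i, m_i > 0. -/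

import Mathlib

open MeasureTheory Set Matrix

noncomputable def stdNormalPDF (z : ℝ) : ℝ :=
  Real.exp (-z ^ 2 / 2) / Real.sqrt (2 * Real.pi)

noncomputable def stdNormalCDF (z : ℝ) : ℝ :=
  ∫ t in Set.Iic z, stdNormalPDF t

noncomputable def probitWeight (z : ℝ) : ℝ :=
  (stdNormalPDF z) ^ 2 / (stdNormalCDF z * (1 - stdNormalCDF z))





lemma pdf_pos (z : ℝ) : 0 < stdNormalPDF z := by
  unfold stdNormalPDF
  positivity

lemma pdf_eq (z : ℝ) : stdNormalPDF z = (Real.sqrt (2 * Real.pi))⁻¹ * Real.exp (-(1/2) * z ^ 2) := by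
  unfold stdNormalPDF; rw [div_eq_inv_mul]; ring_nf

lemma integrable_pdf : Integrable stdNormalPDF := by
  have h := (integrable_exp_neg_mul_sq (by norm_num : (0:ℝ) < 1/2)).const_mul
    (Real.sqrt (2 * Real.pi))⁻¹
  have : stdNormalPDF = fun z => (Real.sqrt (2 * Real.pi))⁻¹ * Real.exp (-(1/2) * z ^ 2) :=
    funext pdf_eq
  rw [this]
  convert h using 2 with z

lemma integral_pdf : ∫ z, stdNormalPDF z = 1 := by
  have h := integral_gaussian (1/2)
  have h2 : ∫ z : ℝ, Real.exp (-(1/2) * z ^ 2) = Real.sqrt (2 * Real.pi) := by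
    rw [h]; congr 1; rw [div_div_eq_mul_div, div_eq_iff (by norm_num)]; ring
  have hs : 0 < Real.sqrt (2 * Real.pi) := Real.sqrt_pos.mpr (by positivity)
  simp only [pdf_eq]
  rw [MeasureTheory.integral_const_mul, h2]
  field_simp

lemma pdf_even (z : ℝ) : stdNormalPDF (-z) = stdNormalPDF z := by
  simp [stdNormalPDF]

lemma pdf_antitone {a b : ℝ} (ha : 0 ≤ a) (hab : a ≤ b) : stdNormalPDF b ≤ stdNormalPDF a := by
  unfold stdNormalPDF
  have hs : 0 < Real.sqrt (2 * Real.pi) := Real.sqrt_pos.mpr (by positivity)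
  gcongr





lemma cdf_add_compl (z : ℝ) : stdNormalCDF z + ∫ t in Set.Ioi z, stdNormalPDF t = 1 := by
  rw [stdNormalCDF, ← integral_pdf]
  rw [← intervalIntegral.integral_Iic_add_Ioi (integrable_pdf.integrableOn) (integrable_pdf.integrableOn)]

lemma integral_Ioi_pdf_pos (z : ℝ) : 0 < ∫ t in Set.Ioi z, stdNormalPDF t := by
  rw [setIntegral_pos_iff_support_of_nonneg_ae
    (Filter.Eventually.of_forall fun t => (pdf_pos t).le) integrable_pdf.integrableOn]
  have hsupp : Function.support stdNormalPDF = Set.univ :=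
    Set.eq_univ_of_forall fun t => (pdf_pos t).ne'
  rw [hsupp, Set.univ_inter]
  simp [Real.volume_Ioi]

lemma cdf_pos (z : ℝ) : 0 < stdNormalCDF z := by
  rw [stdNormalCDF, setIntegral_pos_iff_support_of_nonneg_ae
    (Filter.Eventually.of_forall fun t => (pdf_pos t).le) integrable_pdf.integrableOn]
  have hsupp : Function.support stdNormalPDF = Set.univ :=
    Set.eq_univ_of_forall fun t => (pdf_pos t).ne'
  rw [hsupp, Set.univ_inter]
  simp [Real.volume_Iic]

lemma cdf_lt_one (z : ℝ) : stdNormalCDF z < 1 := by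
  have h := cdf_add_compl z
  have := integral_Ioi_pdf_pos z
  linarith

lemma one_sub_cdf_ge {z : ℝ} (hz : 0 ≤ z) : stdNormalPDF (z+1) ≤ 1 - stdNormalCDF z := by
  have h := cdf_add_compl z
  have h1 : ∫ t in Set.Ioc z (z+1), stdNormalPDF t ≤ ∫ t in Set.Ioi z, stdNormalPDF t := by
    apply setIntegral_mono_set integrable_pdf.integrableOn
      (Filter.Eventually.of_forall fun t => (pdf_pos t).le)
    exact HasSubset.Subset.eventuallyLE Set.Ioc_subset_Ioi_self
  have h2 : stdNormalPDF (z+1) * (volume (Set.Ioc z (z+1))).toReal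
      ≤ ∫ t in Set.Ioc z (z+1), stdNormalPDF t := by
    apply setIntegral_ge_of_const_le_real measurableSet_Ioc
    · simp [Real.volume_Ioc]
    · exact fun t ht => pdf_antitone (le_trans hz ht.1.le) ht.2
    · exact integrable_pdf.integrableOn
  rw [Real.volume_Ioc] at h2
  simp only [add_sub_cancel_left, ENNReal.ofReal_one, ENNReal.toReal_one, mul_one] at h2
  linarith

lemma cdf_neg (z : ℝ) : stdNormalCDF (-z) = 1 - stdNormalCDF z := by
  have h1 : stdNormalCDF (-z) = ∫ t in Set.Ioi z, stdNormalPDF t := by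
    rw [stdNormalCDF, ← integral_comp_neg_Ioi]
    simp [pdf_even]
  rw [h1]
  have := cdf_add_compl z
  linarith

lemma cdf_mono : Monotone stdNormalCDF := by
  intro a b hab
  rw [stdNormalCDF, stdNormalCDF]
  apply setIntegral_mono_set integrable_pdf.integrableOn
    (Filter.Eventually.of_forall fun t => (pdf_pos t).le)
    (HasSubset.Subset.eventuallyLE (Iic_subset_Iic.mpr hab))

lemma cdf_zero : stdNormalCDF 0 = 1/2 := by
  have := cdf_neg 0
  rw [neg_zero] at this; linarith


lemma denom_pos (z : ℝ) : 0 < stdNormalCDF z * (1 - stdNormalCDF z) :=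
  mul_pos (cdf_pos z) (by linarith [cdf_lt_one z])

lemma weight_pos (z : ℝ) : 0 < probitWeight z :=
  div_pos (pow_pos (pdf_pos z) 2) (denom_pos z)

lemma weight_symm (z : ℝ) : probitWeight (-z) = probitWeight z := by
  unfold probitWeight
  rw [pdf_even, cdf_neg]
  ring_nf

lemma exp_half5_le : Real.exp (5/2) ≤ 13 := by
  have h1 : Real.exp 1 < 2.7182818286 := Real.exp_one_lt_d9
  have h2 : Real.exp (5/2) ^ 2 = Real.exp 1 ^ 5 := by
    rw [sq, ← Real.exp_add, show (5:ℝ)/2+5/2 = ((5:ℕ):ℝ) by norm_num, ← Real.exp_one_pow]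
  have h3 : (0:ℝ) < Real.exp (5/2) := Real.exp_pos _
  have h4 : (0:ℝ) < Real.exp 1 := Real.exp_pos _
  have h5 : Real.exp 1 ^ 5 < 2.7182818286 ^ 5 := pow_lt_pow_left₀ h1 h4.le (by norm_num)
  have h6 : (2.7182818286:ℝ) ^ 5 ≤ 169 := by norm_num
  nlinarith

lemma exp_bound {a b : ℝ} (hab : a - b ≤ 5/2) : Real.exp a ≤ 13 * Real.exp b := by
  have h1 : Real.exp a = Real.exp (a - b) * Real.exp b := by
    rw [← Real.exp_add]; ring_nf
  have h2 : Real.exp (a - b) ≤ 13 := le_trans (Real.exp_le_exp.mpr hab) exp_half5_le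
  rw [h1]
  have := (Real.exp_pos b).le
  nlinarith

lemma sqrt_twopi_ge_one : 1 ≤ Real.sqrt (2 * Real.pi) := by
  rw [show (1:ℝ) = Real.sqrt 1 by simp]
  exact Real.sqrt_le_sqrt (by nlinarith [Real.pi_gt_three])

lemma weight_le_of_nonneg {z : ℝ} (hz : 0 ≤ z) : probitWeight z ≤ 52 / (1 + Real.exp z) := by
  have hphi1 : 0 < stdNormalPDF (z+1) := pdf_pos (z+1)
  have hd : (1/2) * stdNormalPDF (z+1) ≤ stdNormalCDF z * (1 - stdNormalCDF z) := by
    have h1 : (1:ℝ)/2 ≤ stdNormalCDF z := by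
      rw [← cdf_zero]; exact cdf_mono hz
    have h2 : stdNormalPDF (z+1) ≤ 1 - stdNormalCDF z := one_sub_cdf_ge hz
    nlinarith [cdf_lt_one z, (pdf_pos (z+1)).le]
  have hstep1 : probitWeight z ≤ (stdNormalPDF z)^2 / ((1/2) * stdNormalPDF (z+1)) := by
    apply div_le_div_of_nonneg_left (by positivity) (by positivity) hd
  refine hstep1.trans ?_
  rw [div_le_div_iff₀ (by positivity) (by positivity)]
  -- goal: φ(z)^2 * (1 + exp z) ≤ 52 * ((1/2) * φ(z+1))
  have hkey : Real.exp (-z^2/2) ^ 2 * (1 + Real.exp z) ≤ 26 * Real.exp (-(z+1)^2/2) := by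
    have e1 : Real.exp (-z^2/2) ^ 2 = Real.exp (-z^2) := by
      rw [← Real.exp_nat_mul]; ring_nf
    rw [e1, mul_add, mul_one, ← Real.exp_add]
    have b1 : Real.exp (-z^2) ≤ 13 * Real.exp (-(z+1)^2/2) := exp_bound (by nlinarith [sq_nonneg (z-1)])
    have b2 : Real.exp (-z^2 + z) ≤ 13 * Real.exp (-(z+1)^2/2) := exp_bound (by nlinarith [sq_nonneg (z-2)])
    linarith
  unfold stdNormalPDF
  have hs : (0:ℝ) < Real.sqrt (2 * Real.pi) := by linarith [sqrt_twopi_ge_one]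
  rw [div_pow, div_mul_eq_mul_div, div_le_iff₀ (by positivity)]
  have hexp : (0:ℝ) < Real.exp (-(z+1)^2/2) := Real.exp_pos _
  have h2pi : Real.sqrt (2*Real.pi) ^ 2 = 2 * Real.pi := Real.sq_sqrt (by positivity)
  -- LHS = exp(-z²/2)^2 (1+e^z); RHS = 52 * (1/2 * (exp(-(z+1)²/2)/√(2π))) * √(2π)^2
  calc Real.exp (-z^2/2) ^ 2 * (1 + Real.exp z) ≤ 26 * Real.exp (-(z+1)^2/2) := hkey
    _ ≤ 26 * Real.exp (-(z+1)^2/2) * Real.sqrt (2*Real.pi) := by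
        nlinarith [sqrt_twopi_ge_one]
    _ = 52 * (Real.exp (-(z+1)^2/2) / Real.sqrt (2*Real.pi) * (1/2)) * Real.sqrt (2*Real.pi)^2 := by
        field_simp; ring
    _ = 52 * (1/2 * (Real.exp (-(z+1)^2/2) / Real.sqrt (2*Real.pi))) * Real.sqrt (2*Real.pi)^2 := by
        ring

lemma weight_le (z : ℝ) : probitWeight z ≤ 52 / (1 + Real.exp |z|) := by
  rcases le_or_gt 0 z with h | h
  · rw [abs_of_nonneg h]; exact weight_le_of_nonneg h
  · rw [abs_of_neg h, ← weight_symm z]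
    exact weight_le_of_nonneg (by linarith)

lemma weight_le_const (z : ℝ) : probitWeight z ≤ 52 := by
  refine (weight_le z).trans ?_
  rw [div_le_iff₀ (by positivity)]
  nlinarith [Real.exp_pos |z|]

lemma weight_mul_sq_le (z : ℝ) : probitWeight z * z^2 ≤ 208 := by
  have h1 : z^2 ≤ 4 * (1 + Real.exp |z|) := by
    have h2 := Real.add_one_le_exp (|z|/2)
    have h3 : Real.exp (|z|/2) ^ 2 = Real.exp |z| := by
      rw [← Real.exp_nat_mul]; ring_nf
    have h4 : |z|^2 = z^2 := sq_abs z
    nlinarith [abs_nonneg z, Real.exp_pos |z|]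
  have h5 := weight_le z
  have h6 : (0:ℝ) < 1 + Real.exp |z| := by positivity
  have h7 := (weight_pos z).le
  rw [div_eq_mul_inv] at h5
  calc probitWeight z * z^2 ≤ (52 * (1 + Real.exp |z|)⁻¹) * (4 * (1 + Real.exp |z|)) := by
        apply mul_le_mul h5 h1 (by positivity) (by positivity)
    _ = 208 := by field_simp; ring


lemma pdf_cont : Continuous stdNormalPDF := by
  unfold stdNormalPDF
  fun_prop

lemma cdf_cont : Continuous stdNormalCDF := by
  have h : ∀ a b : ℝ, IntervalIntegrable stdNormalPDF volume a b :=
    fun a b => integrable_pdf.intervalIntegrable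
  have h2 := intervalIntegral.continuous_primitive h 0
  have h3 : stdNormalCDF = fun b => (∫ x in (0:ℝ)..b, stdNormalPDF x) + stdNormalCDF 0 := by
    funext b
    rw [← intervalIntegral.integral_Iic_sub_Iic integrable_pdf.integrableOn
      integrable_pdf.integrableOn]
    unfold stdNormalCDF
    ring
  rw [h3]
  exact h2.add continuous_const

lemma weight_cont : Continuous probitWeight := by
  unfold probitWeight
  exact ((pdf_cont.pow 2).div
    ((cdf_cont.mul (continuous_const.sub cdf_cont))) fun z => (denom_pos z).ne')



lemma real_star_mat {q : ℕ} (U : Matrix (Fin q) (Fin q) ℝ) : star U = U.transpose := by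
  ext i j; simp [conjTranspose]

lemma det_rayleigh_bound {q : ℕ} (hq : 0 < q) (A : Matrix (Fin q) (Fin q) ℝ)
    (hpsd : A.PosSemidef) (T : ℝ) (hT : A.trace ≤ T) (v : Fin q → ℝ) :
    A.det * (v ⬝ᵥ v) ≤ T ^ (q - 1) * (v ⬝ᵥ (A *ᵥ v)) := by
  have hA : A.IsHermitian := hpsd.1
  set μ := hA.eigenvalues with hμ
  have hμnn : ∀ k, 0 ≤ μ k := hpsd.eigenvalues_nonneg
  set U : Matrix (Fin q) (Fin q) ℝ := (Matrix.IsHermitian.eigenvectorUnitary hA : Matrix (Fin q) (Fin q) ℝ) with hU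
  have hUmem : U ∈ Matrix.unitaryGroup (Fin q) ℝ := (Matrix.IsHermitian.eigenvectorUnitary hA).2
  have hUU : U * star U = 1 := (Matrix.mem_unitaryGroup_iff).mp hUmem
  have hUU' : star U * U = 1 := (Matrix.mem_unitaryGroup_iff').mp hUmem
  have hspec : A = U * Matrix.diagonal μ * star U := by
    have := hA.spectral_theorem
    simpa [Function.comp] using this
  -- trace = sum of eigenvalues
  have htrace : A.trace = ∑ k, μ k := by
    rw [hspec, Matrix.trace_mul_cycle, hUU', Matrix.one_mul, Matrix.trace_diagonal]
  -- det = prod of eigenvalues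
  have hdet : A.det = ∏ k, μ k := by
    have := hA.det_eq_prod_eigenvalues
    simpa using this
  set w : Fin q → ℝ := (star U) *ᵥ v with hw
  have key1 : ∀ y : Fin q → ℝ, v ⬝ᵥ (U *ᵥ y) = w ⬝ᵥ y := by
    intro y
    rw [Matrix.dotProduct_mulVec, hw, real_star_mat, ← Matrix.vecMul_transpose]
    simp
  have hAv : v ⬝ᵥ (A *ᵥ v) = ∑ k, μ k * (w k)^2 := by
    rw [hspec, ← Matrix.mulVec_mulVec, ← Matrix.mulVec_mulVec, key1, ← hw]
    have hd : Matrix.diagonal μ *ᵥ w = fun k => μ k * w k := by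
      ext k; rw [Matrix.mulVec_diagonal]
    rw [hd, dotProduct]
    exact Finset.sum_congr rfl fun k _ => by ring
  have hvv : v ⬝ᵥ v = ∑ k, (w k)^2 := by
    have h1 : U *ᵥ w = v := by
      rw [hw, Matrix.mulVec_mulVec, hUU, Matrix.one_mulVec]
    calc v ⬝ᵥ v = v ⬝ᵥ (U *ᵥ w) := by rw [h1]
      _ = w ⬝ᵥ w := key1 w
      _ = ∑ k, (w k)^2 := by simp [dotProduct, pow_two]
  -- pick minimal eigenvalue
  obtain ⟨k0, -, hk0⟩ := Finset.exists_min_image Finset.univ μ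
    ⟨⟨0, hq⟩, Finset.mem_univ _⟩
  have hTnn : 0 ≤ T := le_trans (by rw [htrace]; exact Finset.sum_nonneg fun i _ => hμnn i) hT
  have hμleT : ∀ k, μ k ≤ T := by
    intro k
    refine le_trans ?_ hT
    rw [htrace]
    exact Finset.single_le_sum (f := μ) (fun i _ => hμnn i) (Finset.mem_univ k)
  have hprod : A.det ≤ μ k0 * T ^ (q - 1) := by
    rw [hdet, ← Finset.prod_erase_mul Finset.univ μ (Finset.mem_univ k0), mul_comm]
    apply mul_le_mul_of_nonneg_left ?_ (hμnn k0)
    calc ∏ k ∈ Finset.univ.erase k0, μ k ≤ ∏ k ∈ Finset.univ.erase k0, T :=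
          Finset.prod_le_prod (fun i _ => hμnn i) (fun i _ => hμleT i)
      _ = T ^ (q - 1) := by
          rw [Finset.prod_const, Finset.card_erase_of_mem (Finset.mem_univ k0)]
          simp
  have hray : μ k0 * (v ⬝ᵥ v) ≤ v ⬝ᵥ (A *ᵥ v) := by
    rw [hvv, hAv, Finset.mul_sum]
    exact Finset.sum_le_sum fun k _ =>
      mul_le_mul_of_nonneg_right (hk0 k (Finset.mem_univ k)) (sq_nonneg _)
  have hvvnn : 0 ≤ v ⬝ᵥ v := by rw [hvv]; positivity
  calc A.det * (v ⬝ᵥ v) ≤ (μ k0 * T ^ (q-1)) * (v ⬝ᵥ v) :=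
        mul_le_mul_of_nonneg_right hprod hvvnn
    _ = T ^ (q-1) * (μ k0 * (v ⬝ᵥ v)) := by ring
    _ ≤ T ^ (q-1) * (v ⬝ᵥ (A *ᵥ v)) :=
        mul_le_mul_of_nonneg_left hray (pow_nonneg hTnn _)



lemma gram_mulVec {n p : ℕ} (X : Matrix (Fin n) (Fin p) ℝ) (d : Fin n → ℝ) (v : Fin p → ℝ) :
    v ⬝ᵥ ((X.transpose * Matrix.diagonal d * X) *ᵥ v) = ∑ i, d i * ((X *ᵥ v) i)^2 := by
  have h1 : (X.transpose * Matrix.diagonal d * X) *ᵥ v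
      = X.transpose *ᵥ (Matrix.diagonal d *ᵥ (X *ᵥ v)) := by
    rw [Matrix.mulVec_mulVec, Matrix.mulVec_mulVec]
  rw [h1, Matrix.dotProduct_mulVec, Matrix.vecMul_transpose]
  have hd : Matrix.diagonal d *ᵥ (X *ᵥ v) = fun i => d i * (X *ᵥ v) i := by
    ext i; rw [Matrix.mulVec_diagonal]
  rw [hd, dotProduct]
  exact Finset.sum_congr rfl fun i _ => by ring

lemma gram_isHermitian {n p : ℕ} (X : Matrix (Fin n) (Fin p) ℝ) (d : Fin n → ℝ) :
    (X.transpose * Matrix.diagonal d * X).IsHermitian := by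
  have : ∀ (q r : ℕ) (M : Matrix (Fin q) (Fin r) ℝ), M.conjTranspose = M.transpose := by
    intro q r M; ext i j; simp [Matrix.conjTranspose]
  unfold Matrix.IsHermitian
  rw [this, Matrix.transpose_mul, Matrix.transpose_mul, Matrix.transpose_transpose,
    Matrix.diagonal_transpose, Matrix.mul_assoc]

lemma gram_posSemidef {n p : ℕ} (X : Matrix (Fin n) (Fin p) ℝ) (d : Fin n → ℝ) (hd : ∀ i, 0 ≤ d i) :
    (X.transpose * Matrix.diagonal d * X).PosSemidef := by
  refine Matrix.PosSemidef.of_dotProduct_mulVec_nonneg (gram_isHermitian X d) fun v => ?_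
  have hsv : star v = v := by ext i; simp
  rw [hsv, gram_mulVec]
  exact Finset.sum_nonneg fun i _ => mul_nonneg (hd i) (sq_nonneg _)

lemma gram_posDef {n p : ℕ} (X : Matrix (Fin n) (Fin p) ℝ)
    (hX : LinearIndependent ℝ (fun j : Fin p => (fun i => X i j : Fin n → ℝ)))
    (d : Fin n → ℝ) (hd : ∀ i, 0 < d i) :
    (X.transpose * Matrix.diagonal d * X).PosDef := by
  refine Matrix.PosDef.of_dotProduct_mulVec_pos (gram_isHermitian X d) fun v hv => ?_
  have hsv : star v = v := by ext i; simp
  rw [hsv, gram_mulVec]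
  have hXv : X *ᵥ v ≠ 0 := by
    intro h
    apply hv
    have hli := Fintype.linearIndependent_iff.mp hX v
    have : ∑ j, v j • (fun i => X i j : Fin n → ℝ) = 0 := by
      ext i
      have := congrFun h i
      simpa [Matrix.mulVec, dotProduct, mul_comm] using this
    ext j
    exact hli this j
  obtain ⟨i0, hi0⟩ := Function.ne_iff.mp hXv
  apply Finset.sum_pos' (fun i _ => mul_nonneg (hd i).le (sq_nonneg _))
  exact ⟨i0, Finset.mem_univ _,
    mul_pos (hd i0) (lt_of_le_of_ne (sq_nonneg _) (Ne.symm (pow_ne_zero 2 hi0)))⟩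

lemma gram_trace {n p : ℕ} (X : Matrix (Fin n) (Fin p) ℝ) (d : Fin n → ℝ) :
    (X.transpose * Matrix.diagonal d * X).trace = ∑ i, d i * (∑ j, (X i j)^2) := by
  rw [Matrix.trace_mul_comm, ← Matrix.mul_assoc]
  rw [Matrix.trace]
  have h2 : ∀ i, ((X * X.transpose * Matrix.diagonal d).diag) i
      = (∑ j, X i j * X i j) * d i := by
    intro i
    rw [Matrix.diag_apply, Matrix.mul_diagonal, Matrix.mul_apply]
    simp [Matrix.transpose_apply]
  rw [Finset.sum_congr rfl fun i _ => h2 i]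
  apply Finset.sum_congr rfl
  intro i _
  rw [Finset.mul_sum, Finset.sum_mul]
  exact Finset.sum_congr rfl fun j _ => by ring


theorem stmt_18 (n p : ℕ) (X : Matrix (Fin n) (Fin p) ℝ) (hnp : p ≤ n)
    (hX : LinearIndependent ℝ (fun j : Fin p => (fun i => X i j : Fin n → ℝ)))
    (m y : Fin n → ℝ) (hm : ∀ i, 0 < m i) (hy : ∀ i, 0 ≤ y i ∧ y i ≤ m i)
    (W : EuclideanSpace ℝ (Fin p) → Matrix (Fin n) (Fin n) ℝ)
    (hW : ∀ β, W β = Matrix.diagonal (fun i => probitWeight (∑ j, X i j * β j)))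
    (lstar : EuclideanSpace ℝ (Fin p) → ℝ)
    (hl : ∀ β, lstar β =
      (∑ i, (y i * Real.log (stdNormalCDF (∑ j, X i j * β j)) +
        (m i - y i) * Real.log (1 - stdNormalCDF (∑ j, X i j * β j)))) +
        (1 / 2) * Real.log (X.transpose * Matrix.diagonal m * W β * X).det) :
    (∃ c > (0 : ℝ), ∀ z : ℝ, probitWeight z ≤ c / (1 + Real.exp |z|)) ∧
    (∃ b : EuclideanSpace ℝ (Fin p), ∀ β, lstar β ≤ lstar b) ∧
      Bornology.IsBounded {β : EuclideanSpace ℝ (Fin p) | ∀ β', lstar β' ≤ lstar β} := by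
  refine ⟨⟨52, by norm_num, weight_le⟩, ?_⟩
  -- trivial case p = 0
  rcases Nat.eq_zero_or_pos p with hp0 | hp
  · subst hp0
    have hsub : ∀ β : EuclideanSpace ℝ (Fin 0), β = 0 := fun β => Subsingleton.elim β 0
    constructor
    · exact ⟨0, fun β => by rw [hsub β]⟩
    · apply Bornology.IsBounded.subset (Metric.isBounded_closedBall (x := (0:EuclideanSpace ℝ (Fin 0))) (r := 1))
      intro β _
      simp [hsub β]
  -- main case
  have hn : 0 < n := lt_of_lt_of_le hp hnp
  -- notation
  set t : EuclideanSpace ℝ (Fin p) → Fin n → ℝ := fun β i => ∑ j, X i j * β j with ht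
  set d : EuclideanSpace ℝ (Fin p) → Fin n → ℝ := fun β i => m i * probitWeight (t β i) with hdd
  have hfact : ∀ β : EuclideanSpace ℝ (Fin p), X.transpose * Matrix.diagonal m * W β * X
      = X.transpose * Matrix.diagonal (d β) * X := by
    intro β
    rw [hW β, Matrix.mul_assoc (X.transpose), Matrix.diagonal_mul_diagonal]
  have hdpos : ∀ β i, 0 < d β i := fun β i => mul_pos (hm i) (weight_pos _)
  have hdet_pos : ∀ β : EuclideanSpace ℝ (Fin p), 0 < (X.transpose * Matrix.diagonal m * W β * X).det := by
    intro β
    rw [hfact β]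
    exact (gram_posDef X hX (d β) (hdpos β)).det_pos
  -- trace bound
  set T : ℝ := (∑ i, (m i * 52) * (∑ j, (X i j)^2)) + 1 with hT
  have hT0 : 0 < T := by
    have : ∀ i, (0:ℝ) ≤ (m i * 52) * (∑ j, (X i j)^2) := by
      intro i
      have h0 : (0:ℝ) ≤ ∑ j, (X i j)^2 := Finset.sum_nonneg fun j _ => sq_nonneg _
      exact mul_nonneg (mul_nonneg (hm i).le (by norm_num)) h0
    have := Finset.sum_nonneg (fun i (_ : i ∈ Finset.univ) => this i)
    linarith
  have htrace : ∀ β : EuclideanSpace ℝ (Fin p), (X.transpose * Matrix.diagonal (d β) * X).trace ≤ T := by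
    intro β
    rw [gram_trace]
    have hle : ∀ i, d β i * (∑ j, (X i j)^2) ≤ (m i * 52) * (∑ j, (X i j)^2) := by
      intro i
      have h1 : d β i ≤ m i * 52 :=
        mul_le_mul_of_nonneg_left (weight_le_const _) (hm i).le
      exact mul_le_mul_of_nonneg_right h1 (Finset.sum_nonneg fun j _ => sq_nonneg _)
    calc ∑ i, d β i * (∑ j, (X i j)^2) ≤ ∑ i, (m i * 52) * (∑ j, (X i j)^2) :=
          Finset.sum_le_sum fun i _ => hle i
      _ ≤ T := by rw [hT]; linarith
  -- quadratic form bound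
  set C1 : ℝ := ∑ i : Fin n, m i * 208 with hC1
  have hC1pos : 0 < C1 := by
    rw [hC1]
    apply Finset.sum_pos (fun i _ => mul_pos (hm i) (by norm_num))
    exact ⟨⟨0, hn⟩, Finset.mem_univ _⟩
  have hquad : ∀ β : EuclideanSpace ℝ (Fin p), (fun j => β j) ⬝ᵥ
      ((X.transpose * Matrix.diagonal (d β) * X) *ᵥ (fun j => β j)) ≤ C1 := by
    intro β
    rw [gram_mulVec]
    have hXv : ∀ i, (X *ᵥ (fun j => β j)) i = t β i := by
      intro i; simp [Matrix.mulVec, dotProduct, ht]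
    have hterm : ∀ i, d β i * ((X *ᵥ (fun j => β j)) i)^2 ≤ m i * 208 := by
      intro i
      rw [hXv i, hdd]
      calc m i * probitWeight (t β i) * (t β i)^2
          = m i * (probitWeight (t β i) * (t β i)^2) := by ring
        _ ≤ m i * 208 := mul_le_mul_of_nonneg_left (weight_mul_sq_le _) (hm i).le
    exact Finset.sum_le_sum fun i _ => hterm i
  -- norm identity
  have hnorm : ∀ β : EuclideanSpace ℝ (Fin p), (fun j => β j) ⬝ᵥ (fun j => β j) = ‖β‖^2 := by
    intro β
    rw [EuclideanSpace.norm_eq, Real.sq_sqrt (Finset.sum_nonneg fun i _ => sq_nonneg _)]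
    simp [dotProduct, Real.norm_eq_abs, sq_abs, pow_two]
  set Q : ℝ := T ^ (p-1) * C1 with hQ
  have hQpos : 0 < Q := mul_pos (pow_pos hT0 _) hC1pos
  have hdet_le : ∀ β : EuclideanSpace ℝ (Fin p), (X.transpose * Matrix.diagonal m * W β * X).det * ‖β‖^2 ≤ Q := by
    intro β
    rw [hfact β, ← hnorm β]
    calc (X.transpose * Matrix.diagonal (d β) * X).det * ((fun j => β j) ⬝ᵥ (fun j => β j))
        ≤ T ^ (p-1) * ((fun j => β j) ⬝ᵥ ((X.transpose * Matrix.diagonal (d β) * X) *ᵥ (fun j => β j))) :=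
          det_rayleigh_bound hp _ (gram_posSemidef X (d β) (fun i => (hdpos β i).le)) T (htrace β) _
      _ ≤ T ^ (p-1) * C1 := mul_le_mul_of_nonneg_left (hquad β) (pow_nonneg hT0.le _)
      _ = Q := rfl
  -- likelihood term nonpositive
  have hlik : ∀ β : EuclideanSpace ℝ (Fin p), (∑ i, (y i * Real.log (stdNormalCDF (t β i)) +
      (m i - y i) * Real.log (1 - stdNormalCDF (t β i)))) ≤ 0 := by
    intro β
    apply Finset.sum_nonpos
    intro i _
    have h1 : Real.log (stdNormalCDF (t β i)) ≤ 0 :=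
      Real.log_nonpos (cdf_pos _).le (cdf_lt_one _).le
    have h2 : Real.log (1 - stdNormalCDF (t β i)) ≤ 0 :=
      Real.log_nonpos (by linarith [cdf_lt_one (t β i)]) (by linarith [cdf_pos (t β i)])
    have := (hy i).1; have := (hy i).2
    nlinarith
  -- upper bound for lstar away from 0
  have hupper : ∀ β : EuclideanSpace ℝ (Fin p), β ≠ 0 → lstar β ≤ (1/2) * Real.log Q - Real.log ‖β‖ := by
    intro β hβ
    have hβn : 0 < ‖β‖ := norm_pos_iff.mpr hβ
    have h1 : (X.transpose * Matrix.diagonal m * W β * X).det ≤ Q / ‖β‖^2 := by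
      rw [le_div_iff₀ (by positivity)]
      exact hdet_le β
    have h2 : Real.log (X.transpose * Matrix.diagonal m * W β * X).det
        ≤ Real.log Q - 2 * Real.log ‖β‖ := by
      calc Real.log (X.transpose * Matrix.diagonal m * W β * X).det ≤ Real.log (Q / ‖β‖^2) :=
            Real.log_le_log (hdet_pos β) h1
        _ = Real.log Q - 2 * Real.log ‖β‖ := by
            rw [Real.log_div hQpos.ne' (by positivity), Real.log_pow]
            push_cast; ring
    rw [hl β]
    have h3 := hlik β
    simp only [ht] at h3 ⊢
    linarith
  -- choose radius
  set R : ℝ := max 1 (Real.exp ((1/2) * Real.log Q - lstar 0)) with hR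
  have hR1 : (1:ℝ) ≤ R := le_max_left _ _
  have hRpos : 0 < R := lt_of_lt_of_le one_pos hR1
  have hfar : ∀ β : EuclideanSpace ℝ (Fin p), R < ‖β‖ → lstar β < lstar 0 := by
    intro β hβ
    have hβ0 : β ≠ 0 := by
      intro h; rw [h] at hβ; simp at hβ; linarith
    have h1 := hupper β hβ0
    have h2 : Real.log R < Real.log ‖β‖ := Real.log_lt_log hRpos hβ
    have h3 : (1/2) * Real.log Q - lstar 0 ≤ Real.log R := by
      rw [hR]
      calc (1/2) * Real.log Q - lstar 0
          = Real.log (Real.exp ((1/2) * Real.log Q - lstar 0)) := (Real.log_exp _).symm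
        _ ≤ Real.log (max 1 (Real.exp ((1/2) * Real.log Q - lstar 0))) := by
            apply Real.log_le_log (Real.exp_pos _) (le_max_right _ _)
    linarith
  -- continuity of lstar
  have htc : ∀ i, Continuous fun β : EuclideanSpace ℝ (Fin p) => t β i := by
    intro i
    apply continuous_finset_sum
    intro j _
    exact continuous_const.mul (EuclideanSpace.proj j).continuous
  have hlogc1 : ∀ i, Continuous fun β : EuclideanSpace ℝ (Fin p) => Real.log (stdNormalCDF (t β i)) := by
    intro i
    rw [continuous_iff_continuousAt]
    intro β
    have h1 : ContinuousAt Real.log (stdNormalCDF (t β i)) :=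
      Real.continuousAt_log (cdf_pos _).ne'
    have h2 : ContinuousAt (fun β => stdNormalCDF (t β i)) β :=
      (cdf_cont.comp (htc i)).continuousAt
    have h3 := ContinuousAt.comp (x := β) h1 h2
    exact h3
  have hlogc2 : ∀ i, Continuous fun β : EuclideanSpace ℝ (Fin p) => Real.log (1 - stdNormalCDF (t β i)) := by
    intro i
    rw [continuous_iff_continuousAt]
    intro β
    have h1 : ContinuousAt Real.log (1 - stdNormalCDF (t β i)) :=
      Real.continuousAt_log (sub_ne_zero_of_ne (cdf_lt_one _).ne')
    have h2 : ContinuousAt (fun β => 1 - stdNormalCDF (t β i)) β :=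
      (continuous_const.sub (cdf_cont.comp (htc i))).continuousAt
    have h3 := ContinuousAt.comp (x := β) h1 h2
    exact h3
  have hdetc : Continuous fun β : EuclideanSpace ℝ (Fin p) => (X.transpose * Matrix.diagonal m * W β * X).det := by
    have : (fun β : EuclideanSpace ℝ (Fin p) => (X.transpose * Matrix.diagonal m * W β * X).det)
        = fun β : EuclideanSpace ℝ (Fin p) => (X.transpose * Matrix.diagonal (d β) * X).det := by
      funext β; rw [hfact β]
    rw [this]
    apply Continuous.matrix_det
    apply Continuous.matrix_mul ?_ continuous_const
    apply Continuous.matrix_mul continuous_const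
    apply Continuous.matrix_diagonal
    apply continuous_pi
    intro i
    exact continuous_const.mul (weight_cont.comp (htc i))
  have hcont : Continuous lstar := by
    have : lstar = fun β : EuclideanSpace ℝ (Fin p) => (∑ i, (y i * Real.log (stdNormalCDF (t β i)) +
        (m i - y i) * Real.log (1 - stdNormalCDF (t β i)))) +
        (1 / 2) * Real.log (X.transpose * Matrix.diagonal m * W β * X).det := by
      funext β; rw [hl β]
    rw [this]
    apply Continuous.add
    · apply continuous_finset_sum
      intro i _
      exact (continuous_const.mul (hlogc1 i)).add (continuous_const.mul (hlogc2 i))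
    · apply Continuous.mul continuous_const
      rw [continuous_iff_continuousAt]
      intro β
      have h1 : ContinuousAt Real.log ((X.transpose * Matrix.diagonal m * W β * X).det) :=
        Real.continuousAt_log (hdet_pos β).ne'
      have h3 := ContinuousAt.comp (x := β) h1 hdetc.continuousAt
      exact h3
  -- extreme value theorem on the closed ball
  have hK : IsCompact (Metric.closedBall (0:EuclideanSpace ℝ (Fin p)) R) := isCompact_closedBall _ _
  have h0K : (0:EuclideanSpace ℝ (Fin p)) ∈ Metric.closedBall (0:EuclideanSpace ℝ (Fin p)) R := Metric.mem_closedBall_self hRpos.le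
  obtain ⟨b, hbK, hbmax⟩ := hK.exists_isMaxOn ⟨0, h0K⟩ hcont.continuousOn
  have hmax : ∀ β, lstar β ≤ lstar b := by
    intro β
    rcases le_or_gt ‖β‖ R with h | h
    · exact hbmax (by simpa [Metric.mem_closedBall, dist_zero_right] using h)
    · exact le_trans (hfar β h).le (hbmax h0K)
  refine ⟨⟨b, hmax⟩, ?_⟩
  apply Bornology.IsBounded.subset (Metric.isBounded_closedBall (x := (0:EuclideanSpace ℝ (Fin p))) (r := R))
  intro β hβ
  simp only [Metric.mem_closedBall, dist_zero_right]
  by_contra h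
  push_neg at h
  have h1 := hfar β h
  have h2 := hβ 0
  linarith
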